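/- In a J-category, for any morphisms f : A → B, f' : A' → B' with f weakly equivalent to f' (via a commutative square with vertical weak equivalences u : A → A', v : B → B'), and for each n ≥ 0, the n-th iterated join morphisms h_n : *^n_B A → B and h'_n : *^n_{B'} A' → B' are weakly equivalent morphisms; in particular there is a commutative diagram exhibiting v∘h_n as admitting a weak lifting along h'_n via a weak equivalence *^n_B A → dom of an F-factorization of h'_n. -/
import Mathlib


open CategoryTheory CategoryTheory.Limits ZeroObject

universe v u v' u'

variable (C : Type u) [Category.{v} C] [HasZeroObject C] [HasZeroMorphisms C]

/-- A category satisfying axioms (J1)-(J4) of Doeraene's J-categories: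
a pointed category with fibrations, cofibrations and weak equivalences. -/
structure PreJCat where
  fib : MorphismProperty C
  cofib : MorphismProperty C
  weq : MorphismProperty C
  /-- (J1) isomorphisms are trivial cofibrations -/
  iso_triv_cofib : ∀ {X Y : C} (f : X ⟶ Y), IsIso f → cofib f ∧ weq f
  /-- (J1) isomorphisms are trivial fibrations -/
  iso_triv_fib : ∀ {X Y : C} (f : X ⟶ Y), IsIso f → fib f ∧ weq f
  fib_comp : ∀ {X Y Z : C} {f : X ⟶ Y} {g : Y ⟶ Z}, fib f → fib g → fib (f ≫ g)
  cofib_comp : ∀ {X Y Z : C} {f : X ⟶ Y} {g : Y ⟶ Z}, cofib f → cofib g → cofib (f ≫ g)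
  /-- (J1) two-out-of-three for weak equivalences -/
  weq_comp : ∀ {X Y Z : C} {f : X ⟶ Y} {g : Y ⟶ Z}, weq f → weq g → weq (f ≫ g)
  weq_of_comp_left : ∀ {X Y Z : C} {f : X ⟶ Y} {g : Y ⟶ Z}, weq g → weq (f ≫ g) → weq f
  weq_of_comp_right : ∀ {X Y Z : C} {f : X ⟶ Y} {g : Y ⟶ Z}, weq f → weq (f ≫ g) → weq g
  /-- (J2) pullbacks of fibrations exist, and the base extension is a fibration -/
  pb_exists : ∀ {E B B' : C} (p : E ⟶ B) (f : B' ⟶ B), fib p →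
    ∃ (P : C) (fb : P ⟶ E) (pb : P ⟶ B'), IsPullback fb pb p f ∧ fib pb
  /-- (J2) base extensions of weak equivalences along fibrations are weak equivalences -/
  pb_weq : ∀ {E B B' P : C} {p : E ⟶ B} {f : B' ⟶ B} {fb : P ⟶ E} {pb : P ⟶ B'},
    fib p → IsPullback fb pb p f → (weq f → weq fb) ∧ (weq p → weq pb)
  /-- (J2) dual: pushouts of cofibrations exist -/
  po_exists : ∀ {A X Y : C} (i : A ⟶ X) (g : A ⟶ Y), cofib i →
    ∃ (Q : C) (inl : X ⟶ Q) (inr : Y ⟶ Q), IsPushout i g inl inr ∧ cofib inr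
  po_weq : ∀ {A X Y Q : C} {i : A ⟶ X} {g : A ⟶ Y} {inl : X ⟶ Q} {inr : Y ⟶ Q},
    cofib i → IsPushout i g inl inr → (weq g → weq inl) ∧ (weq i → weq inr)
  /-- (J3) F-factorizations exist -/
  F_fac : ∀ {X Y : C} (f : X ⟶ Y), ∃ (Z : C) (τ : X ⟶ Z) (q : Z ⟶ Y),
    weq τ ∧ fib q ∧ τ ≫ q = f
  /-- (J3) C-factorizations exist -/
  C_fac : ∀ {X Y : C} (f : X ⟶ Y), ∃ (Z : C) (i : X ⟶ Z) (σ : Z ⟶ Y),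
    cofib i ∧ weq σ ∧ i ≫ σ = f
  /-- (J4) cofibrant replacements exist -/
  cof_replace : ∀ X : C, ∃ (Xb : C) (q : Xb ⟶ X), fib q ∧ weq q ∧
    (∀ {E : C} (p : E ⟶ Xb), fib p → weq p → ∃ s : Xb ⟶ E, s ≫ p = 𝟙 Xb)

variable {C}

namespace PreJCat

/-- An object is a cofibrant model if every trivial fibration onto it admits a section. -/
def CofModel (P : PreJCat C) (X : C) : Prop :=
  ∀ {E : C} (p : E ⟶ X), P.fib p → P.weq p → ∃ s : X ⟶ E, s ≫ p = 𝟙 X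

/-- An object is e-fibrant if the morphism to the zero object is a fibration. -/
def EFibrant (P : PreJCat C) (X : C) : Prop := P.fib (0 : X ⟶ 0)

/-- `f` admits a weak lifting along `g` (all objects being cofibrant models). -/
def WeakLifting (P : PreJCat C) {A B Cc : C} (f : A ⟶ B) (g : Cc ⟶ B) : Prop :=
  ∃ (E : C) (τ : Cc ⟶ E) (q : E ⟶ B), P.weq τ ∧ P.fib q ∧ τ ≫ q = g ∧
    ∃ s : A ⟶ E, s ≫ q = f

/-- `g` admits a weak section. -/
def HasWeakSection (P : PreJCat C) {E B : C} (g : E ⟶ B) : Prop :=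
  P.WeakLifting (𝟙 B) g

/-- `j : J ⟶ B` is a join morphism of `f : A ⟶ B` and `g : Cc ⟶ B`: built from an
F-factorization of `g`, a pullback, a C-factorization and a pushout. -/
def IsJoin (P : PreJCat C) {A Cc B J : C} (f : A ⟶ B) (g : Cc ⟶ B) (j : J ⟶ B) : Prop :=
  ∃ (E : C) (τ : Cc ⟶ E) (q : E ⟶ B), P.weq τ ∧ P.fib q ∧ τ ≫ q = g ∧
  ∃ (E' Z : C) (fbar : E' ⟶ E) (pbar : E' ⟶ A) (i : E' ⟶ Z) (σ : Z ⟶ E)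
    (a : A ⟶ J) (bz : Z ⟶ J),
    IsPullback fbar pbar q f ∧ P.cofib i ∧ P.weq σ ∧ i ≫ σ = fbar ∧
    IsPushout pbar i a bz ∧ a ≫ j = f ∧ bz ≫ j = σ ≫ q

/-- `IsIterJoin P p n h` : `h` is an `n`-th iterated join morphism `*ⁿ_B E ⟶ B` of `p`. -/
inductive IsIterJoin (P : PreJCat C) {E B : C} (p : E ⟶ B) : ℕ → ∀ {X : C}, (X ⟶ B) → Prop
  | zero : IsIterJoin P p 0 p
  | succ {n : ℕ} {X Y : C} {h : X ⟶ B} {h' : Y ⟶ B} :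
      IsIterJoin P p n h → P.IsJoin h p h' → IsIterJoin P p (n + 1) h'

/-- The Ganea-type sectional category of a morphism. -/
noncomputable def Gsecat (P : PreJCat C) {E B : C} (p : E ⟶ B) : ℕ∞ :=
  sInf {n : ℕ∞ | ∃ m : ℕ, n = (m : ℕ∞) ∧
    ∃ (X : C) (h : X ⟶ B), P.IsIterJoin p m h ∧ P.HasWeakSection h}

end PreJCat

/-- `p1, p2` exhibit `Pd` as a binary product of `X` and `Y`. -/
def IsBinProd {X Y Pd : C} (p1 : Pd ⟶ X) (p2 : Pd ⟶ Y) : Prop :=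
  Nonempty (IsLimit (BinaryFan.mk p1 p2))

namespace PreJCat

/-- `IsFatWedge P p n j Δ` : `j : Tⁿ(p) ⟶ B^{n+1}` is an `n`-th fat wedge morphism of `p`
together with the diagonal `Δ : B ⟶ B^{n+1}`. -/
inductive IsFatWedge (P : PreJCat C) {E B : C} (p : E ⟶ B) :
    ℕ → ∀ {T Pw : C}, (T ⟶ Pw) → (B ⟶ Pw) → Prop
  | zero : IsFatWedge P p 0 p (𝟙 B)
  | succ {n : ℕ} {T Pn : C} {j : T ⟶ Pn} {Δ : B ⟶ Pn}
      (hprev : IsFatWedge P p n j Δ)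
      {Pn1 : C} {pr1 : Pn1 ⟶ Pn} {pr2 : Pn1 ⟶ B} (hP : IsBinProd pr1 pr2)
      {TB : C} {q1 : TB ⟶ T} {q2 : TB ⟶ B} (hTB : IsBinProd q1 q2)
      {PE : C} {r1 : PE ⟶ Pn} {r2 : PE ⟶ E} (hPE : IsBinProd r1 r2)
      {jB : TB ⟶ Pn1} (hjB : jB ≫ pr1 = q1 ≫ j ∧ jB ≫ pr2 = q2)
      {pP : PE ⟶ Pn1} (hpP : pP ≫ pr1 = r1 ∧ pP ≫ pr2 = r2 ≫ p)
      {Tn1 : C} {j' : Tn1 ⟶ Pn1} (hjoin : P.IsJoin jB pP j')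
      {Δ' : B ⟶ Pn1} (hΔ : Δ' ≫ pr1 = Δ ∧ Δ' ≫ pr2 = 𝟙 B) :
      IsFatWedge P p (n + 1) j' Δ'

/-- The Whitehead-type sectional category of a morphism with e-fibrant codomain. -/
noncomputable def WsecatE (P : PreJCat C) {E B : C} (p : E ⟶ B) : ℕ∞ :=
  sInf {n : ℕ∞ | ∃ m : ℕ, n = (m : ℕ∞) ∧
    ∃ (T Pw : C) (j : T ⟶ Pw) (Δ : B ⟶ Pw), P.IsFatWedge p m j Δ ∧ P.WeakLifting Δ j}

/-- The Whitehead-type sectional category of an arbitrary morphism, via e-fibrant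
replacements of the codomain. -/
noncomputable def Wsecat (P : PreJCat C) {E B : C} (p : E ⟶ B) : ℕ∞ :=
  ⨅ (F : C) (τ : B ⟶ F) (_ : P.weq τ ∧ P.EFibrant F), P.WsecatE (p ≫ τ)

/-- A commutative square is a homotopy pullback. -/
def IsHPB (P : PreJCat C) {D A Cc B : C} (f' : D ⟶ Cc) (g' : D ⟶ A)
    (g : Cc ⟶ B) (f : A ⟶ B) : Prop :=
  f' ≫ g = g' ≫ f ∧ ∃ (E : C) (τ : Cc ⟶ E) (q : E ⟶ B), P.weq τ ∧ P.fib q ∧ τ ≫ q = g ∧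
    ∃ (Pt : C) (pr1 : Pt ⟶ E) (pr2 : Pt ⟶ A), IsPullback pr1 pr2 q f ∧
      ∃ w : D ⟶ Pt, P.weq w ∧ w ≫ pr1 = f' ≫ τ ∧ w ≫ pr2 = g'

/-- A commutative square is a homotopy pushout. -/
def IsHPO (P : PreJCat C) {A B Cc D : C} (f : A ⟶ B) (g : A ⟶ Cc)
    (i' : B ⟶ D) (j' : Cc ⟶ D) : Prop :=
  f ≫ i' = g ≫ j' ∧ ∃ (Z : C) (i : A ⟶ Z) (σ : Z ⟶ B), P.cofib i ∧ P.weq σ ∧ i ≫ σ = f ∧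
    ∃ (Q : C) (inl : Z ⟶ Q) (inr : Cc ⟶ Q), IsPushout i g inl inr ∧
      ∃ w : Q ⟶ D, P.weq w ∧ inl ≫ w = σ ≫ i' ∧ inr ≫ w = j'

/-- `A-A'-B'-B` is a weak pullback over `b : B ⟶ B'` (all objects cofibrant models). -/
def IsWeakPullback (P : PreJCat C) {A B A' B' : C}
    (f : A ⟶ B) (f' : A' ⟶ B') (b : B ⟶ B') : Prop :=
  ∃ (X : C) (τ : A' ⟶ X) (q : X ⟶ B'), P.weq τ ∧ P.fib q ∧ τ ≫ q = f' ∧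
    ∃ x : A ⟶ X, P.IsHPB x f q b

/-- `g : G ⟶ B` is an `n`-th Ganea map of `B`: the `n`-th iterated join of `0 ⟶ B`. -/
def IsGaneaMap (P : PreJCat C) (B : C) (n : ℕ) {G : C} (g : G ⟶ B) : Prop :=
  P.IsIterJoin (0 : (0 : C) ⟶ B) n g

/-- The Lusternik-Schnirelmann category of an object. -/
noncomputable def catObj (P : PreJCat C) (B : C) : ℕ∞ :=
  sInf {n : ℕ∞ | ∃ m : ℕ, n = (m : ℕ∞) ∧
    ∃ (G : C) (g : G ⟶ B), P.IsGaneaMap B m g ∧ P.HasWeakSection g}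

/-- The Lusternik-Schnirelmann category of a morphism `b : B ⟶ B'`:
least `n` such that `b` admits a weak lifting along the `n`-th Ganea map of `B'`. -/
noncomputable def catMor (P : PreJCat C) {B B' : C} (b : B ⟶ B') : ℕ∞ :=
  sInf {n : ℕ∞ | ∃ m : ℕ, n = (m : ℕ∞) ∧
    ∃ (G : C) (g : G ⟶ B'), P.IsGaneaMap B' m g ∧ P.WeakLifting b g}

/-- One step of a zigzag: a weak equivalence of morphisms in the arrow category. -/
def MorWeqStep (P : PreJCat C) (u v : Arrow C) : Prop :=
  ∃ h : u ⟶ v, P.weq h.left ∧ P.weq h.right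

/-- Two morphisms are weakly equivalent: joined by a finite zigzag of weak
equivalences of morphisms. -/
def WeaklyEquivMor (P : PreJCat C) (u v : Arrow C) : Prop :=
  Relation.EqvGen P.MorWeqStep u v

def ObjWeqStep (P : PreJCat C) (X Y : C) : Prop := ∃ f : X ⟶ Y, P.weq f

/-- Two objects are weakly equivalent: joined by a finite zigzag of weak equivalences. -/
def WeaklyEquivObj (P : PreJCat C) (X Y : C) : Prop :=
  Relation.EqvGen P.ObjWeqStep X Y

/-- The abstract topological complexity of an e-fibrant object:
the sectional category of the diagonal `B ⟶ B × B`. -/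
noncomputable def TCE (P : PreJCat C) (B : C) : ℕ∞ :=
  ⨅ (Pd : C) (p1 : Pd ⟶ B) (p2 : Pd ⟶ B) (_ : IsBinProd p1 p2)
    (Δ : B ⟶ Pd) (_ : Δ ≫ p1 = 𝟙 B ∧ Δ ≫ p2 = 𝟙 B), P.Gsecat Δ

/-- The abstract topological complexity of an arbitrary object, via e-fibrant
replacements. -/
noncomputable def TC (P : PreJCat C) (B : C) : ℕ∞ :=
  ⨅ (F : C) (τ : B ⟶ F) (_ : P.weq τ ∧ P.EFibrant F), P.TCE F

end PreJCat

variable (C)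

/-- A J-category: (J1)-(J4) together with the cube axiom (J5). -/
structure JCat extends PreJCat C where
  /-- (J5) the cube axiom: in a commutative cube whose bottom face is a homotopy
  pushout and whose vertical faces are homotopy pullbacks, the top face is a
  homotopy pushout. -/
  cube : ∀ {X00 X01 X10 X11 Y00 Y01 Y10 Y11 : C}
    {tf : X00 ⟶ X01} {tg : X00 ⟶ X10} {ti : X01 ⟶ X11} {tj : X10 ⟶ X11}
    {bf : Y00 ⟶ Y01} {bg : Y00 ⟶ Y10} {bi : Y01 ⟶ Y11} {bj : Y10 ⟶ Y11}
    {v00 : X00 ⟶ Y00} {v01 : X01 ⟶ Y01} {v10 : X10 ⟶ Y10} {v11 : X11 ⟶ Y11},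
    tf ≫ ti = tg ≫ tj →
    toPreJCat.IsHPO bf bg bi bj →
    toPreJCat.IsHPB tf v00 v01 bf →
    toPreJCat.IsHPB tg v00 v10 bg →
    toPreJCat.IsHPB ti v01 v11 bi →
    toPreJCat.IsHPB tj v10 v11 bj →
    toPreJCat.IsHPO tf tg ti tj

variable {C}

/-- A modelization functor: preserves weak equivalences, homotopy pullbacks and
homotopy pushouts. -/
structure ModelizationFunctor {D : Type u'} [Category.{v'} D] [HasZeroObject D]
    [HasZeroMorphisms D] (P : PreJCat C) (Q : PreJCat D) where
  F : C ⥤ D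
  map_weq : ∀ {X Y : C} (f : X ⟶ Y), P.weq f → Q.weq (F.map f)
  map_hpb : ∀ {Dd A Cc B : C} {f' : Dd ⟶ Cc} {g' : Dd ⟶ A} {g : Cc ⟶ B} {f : A ⟶ B},
    P.IsHPB f' g' g f → Q.IsHPB (F.map f') (F.map g') (F.map g) (F.map f)
  map_hpo : ∀ {A B Cc Dd : C} {f : A ⟶ B} {g : A ⟶ Cc} {i' : B ⟶ Dd} {j' : Cc ⟶ Dd},
    P.IsHPO f g i' j' → Q.IsHPO (F.map f) (F.map g) (F.map i') (F.map j')

section Aux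

variable {C : Type u} [Category.{v} C] [HasZeroObject C] [HasZeroMorphisms C]

namespace PreJCat

lemma weq_id' (P : PreJCat C) (X : C) : P.weq (𝟙 X) :=
  (P.iso_triv_fib _ inferInstance).2

/-- In any pullback square with a fibration on one side, the opposite leg is a fibration. -/
lemma fib_snd' (P : PreJCat C) {E B B' Pt : C} {p : E ⟶ B} {f : B' ⟶ B}
    {fb : Pt ⟶ E} {pb : Pt ⟶ B'} (h : IsPullback fb pb p f) (hp : P.fib p) :
    P.fib pb := by
  obtain ⟨P₀, fb₀, pb₀, h₀, hfib₀⟩ := P.pb_exists p f hp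
  have e : (h.isoIsPullback _ _ h₀).hom ≫ pb₀ = pb := h.isoIsPullback_hom_snd _ _ h₀
  rw [← e]
  exact P.fib_comp (P.iso_triv_fib _ inferInstance).1 hfib₀

/-- In any pushout square with a cofibration on one side, the opposite leg is a cofibration. -/
lemma cofib_inr' (P : PreJCat C) {A X Y Q : C} {i : A ⟶ X} {g : A ⟶ Y}
    {inl : X ⟶ Q} {inr : Y ⟶ Q} (h : IsPushout i g inl inr) (hi : P.cofib i) :
    P.cofib inr := by
  obtain ⟨Q₀, inl₀, inr₀, h₀, hc₀⟩ := P.po_exists i g hi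
  have e : inr₀ ≫ (h₀.isoIsPushout _ _ h).hom = inr := h₀.inr_isoIsPushout_hom _ _ h
  rw [← e]
  exact P.cofib_comp hc₀ (P.iso_triv_cofib _ inferInstance).1

/-- Auxiliary comparison relation: `g' : X' ⟶ B'` admits an F-factorization through which
both a weak equivalence from `X'` and a weak equivalence from `X` (over `v`) factor. -/
def Comp (P : PreJCat C) {X B X' B' : C} (g : X ⟶ B) (g' : X' ⟶ B') (v : B ⟶ B') : Prop :=
  ∃ (E : C) (τ : X' ⟶ E) (q : E ⟶ B'), P.weq τ ∧ P.fib q ∧ τ ≫ q = g' ∧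
    ∃ s : X ⟶ E, P.weq s ∧ s ≫ q = g ≫ v

/-- Comparison of two F-factorizations of the same morphism, using cofibrant models. -/
lemma ffCompare (P : PreJCat C) (hc : ∀ Xo : C, P.CofModel Xo)
    {A B E₁ E₂ : C} {f : A ⟶ B} {τ₁ : A ⟶ E₁} {q₁ : E₁ ⟶ B} {τ₂ : A ⟶ E₂} {q₂ : E₂ ⟶ B}
    (hτ₁ : P.weq τ₁) (hq₁ : P.fib q₁) (h₁ : τ₁ ≫ q₁ = f)
    (hτ₂ : P.weq τ₂) (hq₂ : P.fib q₂) (h₂ : τ₂ ≫ q₂ = f) :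
    ∃ e : E₁ ⟶ E₂, P.weq e ∧ e ≫ q₂ = q₁ := by
  obtain ⟨R, fbR, pbR, hR, hfibR⟩ := P.pb_exists q₂ q₁ hq₂
  have w : τ₂ ≫ q₂ = τ₁ ≫ q₁ := by rw [h₁, h₂]
  obtain ⟨N, τc, qc, hτc, hqc, hcfac⟩ := P.F_fac (hR.lift τ₂ τ₁ w)
  have hfib : P.fib (qc ≫ pbR) := P.fib_comp hqc hfibR
  have e1 : τc ≫ qc ≫ pbR = τ₁ := by
    rw [← Category.assoc, hcfac, hR.lift_snd]
  have hweq : P.weq (qc ≫ pbR) := P.weq_of_comp_right hτc (by rw [e1]; exact hτ₁)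
  obtain ⟨s, hs⟩ := hc E₁ _ hfib hweq
  have hsweq : P.weq s := P.weq_of_comp_left hweq (by rw [hs]; exact P.weq_id' _)
  have e2 : τc ≫ qc ≫ fbR = τ₂ := by
    rw [← Category.assoc, hcfac, hR.lift_fst]
  refine ⟨s ≫ qc ≫ fbR, ?_, ?_⟩
  · exact P.weq_comp hsweq (P.weq_of_comp_right hτc (by rw [e2]; exact hτ₂))
  · rw [Category.assoc, Category.assoc, hR.w, ← Category.assoc, ← Category.assoc,
      Category.assoc s qc pbR, hs, Category.id_comp]

lemma comp_symm_id (P : PreJCat C) {X B X' : C} {g : X ⟶ B} {g' : X' ⟶ B}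
    (h : P.Comp g g' (𝟙 B)) : P.Comp g' g (𝟙 B) := by
  obtain ⟨E, τ, q, hτ, hq, hfac, s, hs, hsq⟩ := h
  exact ⟨E, s, q, hs, hq, by rw [hsq, Category.comp_id], τ, hτ, by rw [hfac, Category.comp_id]⟩

lemma comp_trans (P : PreJCat C) (hc : ∀ Xo : C, P.CofModel Xo)
    {X B X₁ B₁ X₂ B₂ : C} {g : X ⟶ B} {g₁ : X₁ ⟶ B₁} {g₂ : X₂ ⟶ B₂}
    {v₁ : B ⟶ B₁} {v₂ : B₁ ⟶ B₂} (hv₂ : P.weq v₂)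
    (h1 : P.Comp g g₁ v₁) (h2 : P.Comp g₁ g₂ v₂) : P.Comp g g₂ (v₁ ≫ v₂) := by
  obtain ⟨E₁, τ₁, q₁, hτ₁, hq₁, hfac₁, s, hs, hsq⟩ := h1
  obtain ⟨E₂, τ₂, q₂, hτ₂, hq₂, hfac₂, s', hs', hsq'⟩ := h2
  obtain ⟨W, fbW, pbW, hW, hfibW⟩ := P.pb_exists q₂ v₂ hq₂
  have hfbW : P.weq fbW := (P.pb_weq hq₂ hW).1 hv₂
  have hk := hW.lift_fst s' g₁ hsq'
  have hk' := hW.lift_snd s' g₁ hsq'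
  set k := hW.lift s' g₁ hsq' with hkdef
  have hkweq : P.weq k := P.weq_of_comp_left hfbW (by rw [hk]; exact hs')
  obtain ⟨e, he, heq⟩ := P.ffCompare hc hτ₁ hq₁ hfac₁ hkweq hfibW hk'
  refine ⟨E₂, τ₂, q₂, hτ₂, hq₂, hfac₂, s ≫ e ≫ fbW, P.weq_comp hs (P.weq_comp he hfbW), ?_⟩
  rw [Category.assoc, Category.assoc, hW.w, ← Category.assoc, ← Category.assoc, ← Category.assoc,
    Category.assoc s e pbW, heq, hsq, Category.assoc]

/-- Joins always exist. -/
lemma joinExists (P : PreJCat C) {X B A : C} (g : X ⟶ B) (f : A ⟶ B) :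
    ∃ (J : C) (j : J ⟶ B), P.IsJoin g f j := by
  obtain ⟨E, τ, q, hτ, hq, hfac⟩ := P.F_fac f
  obtain ⟨Pp, fbar, pbar, hpb, _⟩ := P.pb_exists q g hq
  obtain ⟨Z, i, σ, hi, hσ, hiσ⟩ := P.C_fac fbar
  obtain ⟨J, bz, a, hpo0, _⟩ := P.po_exists i pbar hi
  have hpo := hpo0.flip
  have w : pbar ≫ g = i ≫ σ ≫ q := by
    rw [← hpb.w, ← Category.assoc, hiσ]
  refine ⟨J, hpo.desc g (σ ≫ q) w, E, τ, q, hτ, hq, hfac, Pp, Z, fbar, pbar, i, σ, a, bz,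
    hpb, hi, hσ, hiσ, hpo, hpo.inl_desc _ _ w, hpo.inr_desc _ _ w⟩

end PreJCat

end Aux
section Aux2

variable {C : Type u} [Category.{v} C] [HasZeroObject C] [HasZeroMorphisms C]

namespace PreJCat

set_option maxHeartbeats 1000000 in
/-- The key lemma: a strict weak-equivalence map between the data of two join
constructions induces a comparison between the joins. -/
lemma joinMap (P : PreJCat C)
    {X B X' B' : C} {g : X ⟶ B} {g' : X' ⟶ B'} {v : B ⟶ B'} {x : X ⟶ X'}
    (hx : P.weq x) (hxg : x ≫ g' = g ≫ v)
    -- source join data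
    {E Pp Z J : C} {q : E ⟶ B} {fbar : Pp ⟶ E} {pbar : Pp ⟶ X}
    {i : Pp ⟶ Z} {σ : Z ⟶ E} {a : X ⟶ J} {bz : Z ⟶ J} {j : J ⟶ B}
    (hi : P.cofib i) (hσ : P.weq σ) (hiσ : i ≫ σ = fbar)
    (hpo : IsPushout pbar i a bz) (haj : a ≫ j = g) (hbzj : bz ≫ j = σ ≫ q)
    -- target join data
    {E' Pp' Z' J' : C} {q' : E' ⟶ B'} {fbar' : Pp' ⟶ E'} {pbar' : Pp' ⟶ X'}
    {i' : Pp' ⟶ Z'} {σ' : Z' ⟶ E'} {a' : X' ⟶ J'} {bz' : Z' ⟶ J'} {j' : J' ⟶ B'}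
    (hw' : fbar' ≫ q' = pbar' ≫ g')
    (hi' : P.cofib i') (hσ' : P.weq σ') (hiσ' : i' ≫ σ' = fbar')
    (hpo' : IsPushout pbar' i' a' bz') (haj' : a' ≫ j' = g') (hbzj' : bz' ≫ j' = σ' ≫ q')
    -- comparison maps
    {ε : E ⟶ E'} (hε : P.weq ε) (hεq : ε ≫ q' = q ≫ v)
    {ρ : Pp ⟶ Pp'} (hρ : P.weq ρ) (hρf : ρ ≫ fbar' = fbar ≫ ε)
    (hρp : ρ ≫ pbar' = pbar ≫ x) :
    P.Comp j j' v := by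
  -- Step 1: push the source cofibration forward along ρ
  obtain ⟨Zp, inlz, inrz, hpoZ, hcinrz⟩ := P.po_exists i ρ hi
  have hinlz : P.weq inlz := (P.po_weq hi hpoZ).1 hρ
  -- Step 2: the induced C-factorization-like map on Zp
  have wσp : i ≫ σ ≫ ε = ρ ≫ fbar' := by rw [← Category.assoc, hiσ, hρf]
  obtain ⟨σp, hσp1, hσp2⟩ : ∃ σp : Zp ⟶ E', inlz ≫ σp = σ ≫ ε ∧ inrz ≫ σp = fbar' :=
    ⟨hpoZ.desc (σ ≫ ε) fbar' wσp, hpoZ.inl_desc _ _ wσp, hpoZ.inr_desc _ _ wσp⟩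
  have hσpweq : P.weq σp :=
    P.weq_of_comp_right hinlz (by rw [hσp1]; exact P.weq_comp hσ hε)
  -- Step 3: pushout of the two C-factorizations of fbar'
  obtain ⟨Z₃, inl₃, inr₃, hpo₃, hcinr₃⟩ := P.po_exists i' inrz hi'
  have wδ : i' ≫ σ' = inrz ≫ σp := by rw [hiσ', hσp2]
  obtain ⟨δ₃, hδ1, hδ2⟩ : ∃ δ₃ : Z₃ ⟶ E', inl₃ ≫ δ₃ = σ' ∧ inr₃ ≫ δ₃ = σp :=
    ⟨hpo₃.desc σ' σp wδ, hpo₃.inl_desc _ _ wδ, hpo₃.inr_desc _ _ wδ⟩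
  -- Step 4: common refinement of the two C-factorizations
  obtain ⟨Z₄, i₃, σ₄, hi₃, hσ₄, hfac₄⟩ := P.C_fac δ₃
  have hcinl₃ : P.cofib inl₃ := P.cofib_inr' hpo₃.flip hcinrz
  have hζ'c : P.cofib (inl₃ ≫ i₃) := P.cofib_comp hcinl₃ hi₃
  have hζpc : P.cofib (inr₃ ≫ i₃) := P.cofib_comp hcinr₃ hi₃
  have hζ'σ : (inl₃ ≫ i₃) ≫ σ₄ = σ' := by rw [Category.assoc, hfac₄, hδ1]
  have hζpσ : (inr₃ ≫ i₃) ≫ σ₄ = σp := by rw [Category.assoc, hfac₄, hδ2]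
  have hζ'w : P.weq (inl₃ ≫ i₃) := P.weq_of_comp_left hσ₄ (by rw [hζ'σ]; exact hσ')
  have hζpw : P.weq (inr₃ ≫ i₃) := P.weq_of_comp_left hσ₄ (by rw [hζpσ]; exact hσpweq)
  have hi₄ : P.cofib (i' ≫ inl₃ ≫ i₃) := P.cofib_comp hi' hζ'c
  have hkey : inrz ≫ inr₃ ≫ i₃ = i' ≫ inl₃ ≫ i₃ := by
    rw [← Category.assoc, ← hpo₃.w, Category.assoc]
  have hi₄σ : (i' ≫ inl₃ ≫ i₃) ≫ σ₄ = fbar' := by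
    rw [Category.assoc, hζ'σ, hiσ']
  -- Step 5: the refined pushout J₄ and its join-like morphism j₄
  obtain ⟨J₄, bz₄, a₄, hpo₄0, _⟩ := P.po_exists (i' ≫ inl₃ ≫ i₃) pbar' hi₄
  have hpo₄ := hpo₄0.flip
  have wj₄ : pbar' ≫ g' = (i' ≫ inl₃ ≫ i₃) ≫ σ₄ ≫ q' := by
    rw [← Category.assoc, hi₄σ, hw']
  obtain ⟨j₄, hj₄a, hj₄b⟩ : ∃ j₄ : J₄ ⟶ B', a₄ ≫ j₄ = g' ∧ bz₄ ≫ j₄ = σ₄ ≫ q' :=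
    ⟨hpo₄.desc g' (σ₄ ≫ q') wj₄, hpo₄.inl_desc _ _ wj₄, hpo₄.inr_desc _ _ wj₄⟩
  -- Step 6: comparison κ' : J' ⟶ J₄
  have wκ' : pbar' ≫ a₄ = i' ≫ (inl₃ ≫ i₃) ≫ bz₄ := by
    rw [← hpo₄0.w, Category.assoc]
  obtain ⟨κ', hκ'a, hκ'b⟩ : ∃ κ' : J' ⟶ J₄, a' ≫ κ' = a₄ ∧ bz' ≫ κ' = (inl₃ ≫ i₃) ≫ bz₄ :=
    ⟨hpo'.desc a₄ ((inl₃ ≫ i₃) ≫ bz₄) wκ', hpo'.inl_desc _ _ wκ', hpo'.inr_desc _ _ wκ'⟩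
  have hbig' : IsPushout (i' ≫ inl₃ ≫ i₃) pbar' bz₄ (a' ≫ κ') := by rw [hκ'a]; exact hpo₄0
  have hsq' : IsPushout (inl₃ ≫ i₃) bz' bz₄ κ' :=
    IsPushout.of_left hbig' hκ'b.symm hpo'.flip
  have hκ'w : P.weq κ' := (P.po_weq hζ'c hsq').2 hζ'w
  have hκ'j : κ' ≫ j₄ = j' := by
    apply hpo'.hom_ext
    · rw [← Category.assoc, hκ'a, hj₄a, haj']
    · rw [← Category.assoc, hκ'b, Category.assoc, hj₄b, ← Category.assoc, hζ'σ, hbzj']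
  -- Step 7: comparison κp : Jp ⟶ J₄ for the pushed-forward data
  obtain ⟨Jp, bzp, ap, hpoP0, _⟩ := P.po_exists inrz pbar' hcinrz
  have hpoP := hpoP0.flip
  have wjp : pbar' ≫ g' = inrz ≫ σp ≫ q' := by rw [← Category.assoc, hσp2, hw']
  obtain ⟨jp, hjpa, hjpb⟩ : ∃ jp : Jp ⟶ B', ap ≫ jp = g' ∧ bzp ≫ jp = σp ≫ q' :=
    ⟨hpoP.desc g' (σp ≫ q') wjp, hpoP.inl_desc _ _ wjp, hpoP.inr_desc _ _ wjp⟩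
  have wκp : pbar' ≫ a₄ = inrz ≫ (inr₃ ≫ i₃) ≫ bz₄ := by
    rw [← hpo₄0.w, ← hkey]; simp only [Category.assoc]
  obtain ⟨κp, hκpa, hκpb⟩ : ∃ κp : Jp ⟶ J₄, ap ≫ κp = a₄ ∧ bzp ≫ κp = (inr₃ ≫ i₃) ≫ bz₄ :=
    ⟨hpoP.desc a₄ ((inr₃ ≫ i₃) ≫ bz₄) wκp, hpoP.inl_desc _ _ wκp, hpoP.inr_desc _ _ wκp⟩
  have hbigp : IsPushout (inrz ≫ inr₃ ≫ i₃) pbar' bz₄ (ap ≫ κp) := by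
    rw [hκpa, hkey]; exact hpo₄0
  have hsqp : IsPushout (inr₃ ≫ i₃) bzp bz₄ κp :=
    IsPushout.of_left hbigp hκpb.symm hpoP0
  have hκpw : P.weq κp := (P.po_weq hζpc hsqp).2 hζpw
  have hκpj : κp ≫ j₄ = jp := by
    apply hpoP.hom_ext
    · rw [← Category.assoc, hκpa, hj₄a, hjpa]
    · rw [← Category.assoc, hκpb, Category.assoc, hj₄b, ← Category.assoc, hζpσ, hjpb]
  -- Step 8: comparison κ : J ⟶ Jp
  have wκ : pbar ≫ x ≫ ap = i ≫ inlz ≫ bzp := by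
    rw [← Category.assoc, ← hρp, Category.assoc, ← hpoP0.w, ← Category.assoc, ← hpoZ.w,
      Category.assoc]
  obtain ⟨κ, hκa, hκb⟩ : ∃ κ : J ⟶ Jp, a ≫ κ = x ≫ ap ∧ bz ≫ κ = inlz ≫ bzp :=
    ⟨hpo.desc (x ≫ ap) (inlz ≫ bzp) wκ, hpo.inl_desc _ _ wκ, hpo.inr_desc _ _ wκ⟩
  have hbig : IsPushout (pbar ≫ x) i ap (bz ≫ κ) := by
    rw [hκb, ← hρp]; exact hpoZ.flip.paste_horiz hpoP
  have hsq : IsPushout x a ap κ := IsPushout.of_left hbig hκa.symm hpo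
  have hcofa : P.cofib a := P.cofib_inr' hpo.flip hi
  have hκw : P.weq κ := (P.po_weq hcofa hsq.flip).1 hx
  have hκjp : κ ≫ jp = j ≫ v := by
    apply hpo.hom_ext
    · rw [← Category.assoc, hκa, Category.assoc, hjpa, hxg, ← Category.assoc, haj]
    · rw [← Category.assoc, hκb, Category.assoc, hjpb, ← Category.assoc, hσp1,
        Category.assoc, hεq, ← Category.assoc, ← Category.assoc, hbzj, Category.assoc]
  -- Step 9: conclude via an F-factorization of j₄
  obtain ⟨E₄, t₄, r₄, ht₄, hr₄, hfacE₄⟩ := P.F_fac j₄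
  refine ⟨E₄, κ' ≫ t₄, r₄, P.weq_comp hκ'w ht₄, hr₄,
    by rw [Category.assoc, hfacE₄, hκ'j], κ ≫ κp ≫ t₄,
    P.weq_comp hκw (P.weq_comp hκpw ht₄), ?_⟩
  rw [Category.assoc, Category.assoc, hfacE₄, hκpj, hκjp]

end PreJCat

end Aux2
section Aux3

variable {C : Type u} [Category.{v} C] [HasZeroObject C] [HasZeroMorphisms C]

namespace PreJCat

set_option maxHeartbeats 1000000 in
/-- The joins of weakly equivalent data are comparable. -/
lemma joinStep (P : PreJCat C) (hc : ∀ Xo : C, P.CofModel Xo)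
    {A B A' B' X X' : C} {f : A ⟶ B} {f' : A' ⟶ B'} {u : A ⟶ A'} {v : B ⟶ B'}
    (hu : P.weq u) (hv : P.weq v) (hsq : f ≫ v = u ≫ f')
    {g : X ⟶ B} {g' : X' ⟶ B'} {x : X ⟶ X'} (hx : P.weq x) (hxg : x ≫ g' = g ≫ v)
    {J J' : C} {j : J ⟶ B} {j' : J' ⟶ B'}
    (hj : P.IsJoin g f j) (hj' : P.IsJoin g' f' j') : P.Comp j j' v := by
  obtain ⟨E, τ, q, hτ, hq, hfac, Pp, Z, fbar, pbar, i, σ, a, bz,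
    hpb, hi, hσ, hiσ, hpo, haj, hbzj⟩ := hj
  obtain ⟨E', τ', q', hτ', hq', hfac', Pp', Z', fbar', pbar', i', σ', a', bz',
    hpb', hi', hσ', hiσ', hpo', haj', hbzj'⟩ := hj'
  -- (A) compare the fibrant replacements E and E'
  obtain ⟨V, fbV, pbV, hVpb, hfibpbV⟩ := P.pb_exists q' v hq'
  have hfbV : P.weq fbV := (P.pb_weq hq' hVpb).1 hv
  have wtA : (u ≫ τ') ≫ q' = f ≫ v := by rw [Category.assoc, hfac', hsq]
  have htA1 := hVpb.lift_fst (u ≫ τ') f wtA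
  have htA2 := hVpb.lift_snd (u ≫ τ') f wtA
  have htAw : P.weq (hVpb.lift (u ≫ τ') f wtA) :=
    P.weq_of_comp_left hfbV (by rw [htA1]; exact P.weq_comp hu hτ')
  obtain ⟨e₂, he₂, he₂q⟩ := P.ffCompare hc hτ hq hfac htAw hfibpbV htA2
  -- (B) replace e₂ by a span of trivial fibrations out of N
  obtain ⟨T, fbT, pbT, hT, hfibpbT⟩ := P.pb_exists q pbV hq
  have hfibfbT : P.fib fbT := P.fib_snd' hT.flip hfibpbV
  have wδ : (𝟙 E) ≫ q = e₂ ≫ pbV := by rw [Category.id_comp, he₂q]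
  have hδ1 := hT.lift_fst (𝟙 E) e₂ wδ
  have hδ2 := hT.lift_snd (𝟙 E) e₂ wδ
  obtain ⟨N, τδ, qδ, hτδ, hqδ, hδfac⟩ := P.F_fac (hT.lift (𝟙 E) e₂ wδ)
  have hμf : P.fib (qδ ≫ fbT) := P.fib_comp hqδ hfibfbT
  have hμw : P.weq (qδ ≫ fbT) := P.weq_of_comp_right hτδ
    (by rw [← Category.assoc, hδfac, hδ1]; exact P.weq_id' _)
  have hνf : P.fib (qδ ≫ pbT) := P.fib_comp hqδ hfibpbT
  have hνw : P.weq (qδ ≫ pbT) := P.weq_of_comp_right hτδ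
    (by rw [← Category.assoc, hδfac, hδ2]; exact he₂)
  have hμν : (qδ ≫ fbT) ≫ q = (qδ ≫ pbT) ≫ pbV := by
    rw [Category.assoc, Category.assoc, hT.w]
  -- pullback of the trivial fibration N ⟶ E along fbar
  obtain ⟨PN, c₁, c₂, hPN, hfibc₂⟩ := P.pb_exists (qδ ≫ fbT) fbar hμf
  have hc₂w : P.weq c₂ := (P.pb_weq hμf hPN).2 hμw
  -- pullback W of pbV along g
  obtain ⟨W, fbW, pbW, hW, hfibpbW⟩ := P.pb_exists pbV g hfibpbV
  -- the comparison d : PN ⟶ W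
  have wd : (c₁ ≫ qδ ≫ pbT) ≫ pbV = (c₂ ≫ pbar) ≫ g := by
    calc (c₁ ≫ qδ ≫ pbT) ≫ pbV = c₁ ≫ (qδ ≫ pbT) ≫ pbV := by simp only [Category.assoc]
      _ = c₁ ≫ (qδ ≫ fbT) ≫ q := by rw [← hμν]
      _ = (c₁ ≫ (qδ ≫ fbT)) ≫ q := by simp only [Category.assoc]
      _ = (c₂ ≫ fbar) ≫ q := by rw [hPN.w]
      _ = (c₂ ≫ pbar) ≫ g := by rw [Category.assoc, hpb.w, ← Category.assoc]
  have hd1 := hW.lift_fst (c₁ ≫ qδ ≫ pbT) (c₂ ≫ pbar) wd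
  have hd2 := hW.lift_snd (c₁ ≫ qδ ≫ pbT) (c₂ ≫ pbar) wd
  have big : IsPullback c₁ (c₂ ≫ pbar) ((qδ ≫ fbT) ≫ q) g := hPN.paste_vert hpb
  rw [hμν] at big
  have top : IsPullback c₁ (hW.lift (c₁ ≫ qδ ≫ pbT) (c₂ ≫ pbar) wd) (qδ ≫ pbT) fbW := by
    refine IsPullback.of_bot ?_ ?_ hW
    · rw [hd2]; exact big
    · exact hd1.symm
  have hdw : P.weq (hW.lift (c₁ ≫ qδ ≫ pbT) (c₂ ≫ pbar) wd) := (P.pb_weq hνf top).2 hνw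
  -- the comparison β : W ⟶ Pp'
  have wβ : (fbW ≫ fbV) ≫ q' = (pbW ≫ x) ≫ g' := by
    rw [Category.assoc, hVpb.w, ← Category.assoc, hW.w, Category.assoc, Category.assoc, hxg]
  have hβ1 := hpb'.lift_fst (fbW ≫ fbV) (pbW ≫ x) wβ
  have hβ2 := hpb'.lift_snd (fbW ≫ fbV) (pbW ≫ x) wβ
  have bigβ : IsPullback (fbW ≫ fbV) pbW q' (g ≫ v) := hW.paste_horiz hVpb
  have leftβ : IsPullback (hpb'.lift (fbW ≫ fbV) (pbW ≫ x) wβ) pbW pbar' x := by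
    refine IsPullback.of_right ?_ hβ2 hpb'
    rw [hβ1, hxg]; exact bigβ
  have hfibpbar' : P.fib pbar' := P.fib_snd' hpb' hq'
  have hβw : P.weq (hpb'.lift (fbW ≫ fbV) (pbW ≫ x) wβ) := (P.pb_weq hfibpbar' leftβ).1 hx
  -- the auxiliary join built from N
  obtain ⟨ZN, iN, σN, hiN, hσN, hfacN⟩ := P.C_fac c₁
  obtain ⟨JN, bzN, aN, hpoN0, _⟩ := P.po_exists iN (c₂ ≫ pbar) hiN
  have hpoN := hpoN0.flip
  have wjN : (c₂ ≫ pbar) ≫ g = iN ≫ σN ≫ (qδ ≫ fbT) ≫ q := by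
    rw [← Category.assoc iN, hfacN, ← Category.assoc, hPN.w, Category.assoc, Category.assoc,
      hpb.w]
  obtain ⟨jN, hjNa, hjNb⟩ : ∃ jN : JN ⟶ B,
      aN ≫ jN = g ∧ bzN ≫ jN = σN ≫ (qδ ≫ fbT) ≫ q :=
    ⟨hpoN.desc g (σN ≫ (qδ ≫ fbT) ≫ q) wjN, hpoN.inl_desc _ _ wjN, hpoN.inr_desc _ _ wjN⟩
  -- first application of joinMap: from the N-join to the unprimed join, over 𝟙 B
  have comp1 : P.Comp jN j (𝟙 B) := by
    refine P.joinMap (P.weq_id' X) (by rw [Category.id_comp, Category.comp_id])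
      hiN hσN hfacN hpoN hjNa ?_ hpb.w hi hσ hiσ hpo haj hbzj
      (ε := qδ ≫ fbT) hμw (by rw [Category.comp_id]) hc₂w hPN.w.symm
      (by rw [Category.comp_id])
    · rw [hjNb, ← Category.assoc]
  -- second application of joinMap: from the N-join to the primed join, over v
  have comp2 : P.Comp jN j' v := by
    refine P.joinMap hx hxg hiN hσN hfacN hpoN hjNa
      (by rw [hjNb, ← Category.assoc])
      hpb'.w hi' hσ' hiσ' hpo' haj' hbzj'
      (ε := (qδ ≫ pbT) ≫ fbV) (P.weq_comp hνw hfbV) ?_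
      (ρ := (hW.lift (c₁ ≫ qδ ≫ pbT) (c₂ ≫ pbar) wd) ≫ (hpb'.lift (fbW ≫ fbV) (pbW ≫ x) wβ))
      (P.weq_comp hdw hβw) ?_ ?_
    · rw [Category.assoc, hVpb.w, ← Category.assoc, ← hμν]
    · rw [Category.assoc, hβ1, ← Category.assoc, hd1, Category.assoc, Category.assoc]
    · rw [Category.assoc, hβ2, ← Category.assoc, hd2]
  have h := P.comp_trans hc hv (P.comp_symm_id comp1) comp2
  rwa [Category.id_comp] at h

end PreJCat

end Aux3
section Aux4

variable {C : Type u} [Category.{v} C] [HasZeroObject C] [HasZeroMorphisms C]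

namespace PreJCat

/-- Iterated joins of comparable morphisms are comparable. -/
lemma iterComp (P : PreJCat C) (hc : ∀ Xo : C, P.CofModel Xo)
    {A B A' B' : C} {f : A ⟶ B} {f' : A' ⟶ B'} {u : A ⟶ A'} {v : B ⟶ B'}
    (hu : P.weq u) (hv : P.weq v) (hsq : f ≫ v = u ≫ f') :
    ∀ (n : ℕ) {X X' : C} (hn : X ⟶ B) (hn' : X' ⟶ B'),
      P.IsIterJoin f n hn → P.IsIterJoin f' n hn' → P.Comp hn hn' v := by
  intro n
  induction n with
  | zero =>
    intro X X' hn hn' h h'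
    cases h; cases h'
    obtain ⟨E', τ', q', hτ', hq', hfac'⟩ := P.F_fac f'
    exact ⟨E', τ', q', hτ', hq', hfac', u ≫ τ', P.weq_comp hu hτ',
      by rw [Category.assoc, hfac', hsq]⟩
  | succ n ih =>
    intro X X' hn hn' h h'
    cases h with
    | succ hprev hjoin =>
      cases h' with
      | succ hprev' hjoin' =>
        obtain ⟨E₁, τ₁, q₁, hτ₁, hq₁, hfac₁, s₁, hs₁, hs₁q⟩ := ih _ _ hprev hprev'
        obtain ⟨J₁, j₁, hj₁⟩ := P.joinExists q₁ f'
        have c1 : P.Comp hn j₁ v := P.joinStep hc hu hv hsq hs₁ hs₁q hjoin hj₁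
        have c2 : P.Comp hn' j₁ (𝟙 B') :=
          P.joinStep hc (P.weq_id' A') (P.weq_id' B')
            (by rw [Category.comp_id, Category.id_comp]) hτ₁
            (by rw [hfac₁, Category.comp_id]) hjoin' hj₁
        have h3 := P.comp_trans hc (P.weq_id' B') c1 (P.comp_symm_id c2)
        rwa [Category.comp_id] at h3

end PreJCat

end Aux4
/-- In a J-category, if `f` and `f'` are weakly equivalent via a
commutative square with vertical weak equivalences `u, v`, then for each `n` the
`n`-th iterated join morphisms `h_n` and `h'_n` are weakly equivalent morphisms;
in particular `v ∘ h_n` admits a weak lifting along `h'_n` via a weak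
equivalence. -/
theorem iterJoin_weaklyEquiv (J : JCat C)
    (hc : ∀ Xo : C, J.toPreJCat.CofModel Xo)
    {A B A' B' : C} (f : A ⟶ B) (f' : A' ⟶ B')
    (u : A ⟶ A') (v : B ⟶ B')
    (hu : J.toPreJCat.weq u) (hv : J.toPreJCat.weq v)
    (hsq : f ≫ v = u ≫ f')
    (n : ℕ) {X X' : C} (hn : X ⟶ B) (hn' : X' ⟶ B')
    (hhn : J.toPreJCat.IsIterJoin f n hn)
    (hhn' : J.toPreJCat.IsIterJoin f' n hn') :
    J.toPreJCat.WeaklyEquivMor (Arrow.mk hn) (Arrow.mk hn') ∧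
      ∃ (Ez : C) (τ : X' ⟶ Ez) (q : Ez ⟶ B'),
        J.toPreJCat.weq τ ∧ J.toPreJCat.fib q ∧ τ ≫ q = hn' ∧
        ∃ s : X ⟶ Ez, J.toPreJCat.weq s ∧ s ≫ q = hn ≫ v := by
  have hcomp := J.toPreJCat.iterComp hc hu hv hsq n hn hn' hhn hhn'
  obtain ⟨Ez, τ, q, hτ, hq, hfac, s, hs, hsq'⟩ := hcomp
  constructor
  · have step1 : J.toPreJCat.MorWeqStep (Arrow.mk hn) (Arrow.mk q) :=
      ⟨Arrow.homMk (u := s) (v := v) hsq', hs, hv⟩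
    have step2 : J.toPreJCat.MorWeqStep (Arrow.mk hn') (Arrow.mk q) :=
      ⟨Arrow.homMk (u := τ) (v := 𝟙 B') (by simp [hfac]),
        hτ, J.toPreJCat.weq_id' B'⟩
    exact Relation.EqvGen.trans _ _ _ (Relation.EqvGen.rel _ _ step1)
      (Relation.EqvGen.symm _ _ (Relation.EqvGen.rel _ _ step2))
  · exact ⟨Ez, τ, q, hτ, hq, hfac, s, hs, hsq'⟩
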